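/- Let k ≥ 3 and let G be the group with presentation ⟨a, b | a^{2k}b^{2k} = 1, a^{2k-i}b^i = 1 and b^{2k-i}a^i = 1 for all i with 0 ≤ i ≤ k, i ≠ 1⟩. Then G is cyclic of order 2k, generated by the image of a. -/

import Mathlib

/-- The relations `a^{2k}b^{2k}` and, for each `0 ≤ i ≤ k` with `i ≠ 1`,
`a^{2k-i}b^i` and `b^{2k-i}a^i`, where `a = FreeGroup.of 0`, `b = FreeGroup.of 1`. -/
def nestRelsAll (k : ℕ) : Set (FreeGroup (Fin 2)) :=
  {FreeGroup.of 0 ^ (2 * k) * FreeGroup.of 1 ^ (2 * k)} ∪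
    ⋃ i ∈ {i : ℕ | i ≤ k ∧ i ≠ 1},
      { FreeGroup.of 0 ^ (2 * k - i) * FreeGroup.of 1 ^ i,
        FreeGroup.of 1 ^ (2 * k - i) * FreeGroup.of 0 ^ i }

lemma mk_rel_one {k : ℕ} {r : FreeGroup (Fin 2)} (hr : r ∈ nestRelsAll k) :
    PresentedGroup.mk (nestRelsAll k) r = 1 := by
  exact (QuotientGroup.eq_one_iff r).mpr (Subgroup.subset_normalClosure hr)

lemma rel_ab {k : ℕ} {i : ℕ} (hik : i ≤ k) (hi1 : i ≠ 1) :
    (PresentedGroup.of 0 : PresentedGroup (nestRelsAll k)) ^ (2 * k - i) *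
      (PresentedGroup.of 1 : PresentedGroup (nestRelsAll k)) ^ i = 1 := by
  have hr : FreeGroup.of 0 ^ (2 * k - i) * FreeGroup.of (1 : Fin 2) ^ i ∈ nestRelsAll k := by
    right
    refine Set.mem_biUnion (show i ∈ {i : ℕ | i ≤ k ∧ i ≠ 1} from ⟨hik, hi1⟩) ?_
    left; rfl
  have := mk_rel_one hr
  simp only [map_mul, map_pow] at this
  exact this


/-- For `k ≥ 3`, the group
`G = ⟨a, b | a^{2k}b^{2k} = 1, a^{2k-i}b^i = 1, b^{2k-i}a^i = 1 (0 ≤ i ≤ k, i ≠ 1)⟩`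
is cyclic of order `2k`, generated by the image of `a`. -/
theorem stmt1 (k : ℕ) (hk : 3 ≤ k) :
    Subgroup.zpowers (PresentedGroup.of 0 : PresentedGroup (nestRelsAll k)) = ⊤ ∧
      Nat.card (PresentedGroup (nestRelsAll k)) = 2 * k := by
  set a : PresentedGroup (nestRelsAll k) := PresentedGroup.of 0 with haa
  set b : PresentedGroup (nestRelsAll k) := PresentedGroup.of 1 with hbb
  have h0 : a ^ (2 * k) = 1 := by
    have := rel_ab (k := k) (i := 0) (Nat.zero_le k) (by norm_num)
    simpa using this
  have h2 : a ^ (2 * k - 2) * b ^ 2 = 1 := rel_ab (by omega) (by norm_num)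
  have h3 : a ^ (2 * k - 3) * b ^ 3 = 1 := rel_ab (by omega) (by norm_num)
  have hb2 : b ^ 2 = (a ^ (2 * k - 2))⁻¹ := (inv_eq_of_mul_eq_one_right h2).symm
  have hb3 : b ^ 3 = (a ^ (2 * k - 3))⁻¹ := (inv_eq_of_mul_eq_one_right h3).symm
  have hba : b = a := by
    have : b = b ^ 3 * (b ^ 2)⁻¹ := by group
    rw [this, hb2, hb3, inv_inv, ← zpow_natCast, ← zpow_natCast, ← zpow_neg, ← zpow_add]
    have h1 : ((2 * k - 2 : ℕ) : ℤ) - ((2 * k - 3 : ℕ) : ℤ) = 1 := by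
      push_cast [Nat.cast_sub (by omega : 2 ≤ 2 * k), Nat.cast_sub (by omega : 3 ≤ 2 * k)]
      ring
    rw [show (-((2 * k - 3 : ℕ) : ℤ) + ((2 * k - 2 : ℕ) : ℤ)) = 1 by omega, zpow_one]
  have htop : Subgroup.zpowers a = ⊤ := by
    rw [eq_top_iff, ← PresentedGroup.closure_range_of (nestRelsAll k)]
    rw [Subgroup.closure_le]
    rintro x ⟨i, rfl⟩
    fin_cases i
    · exact Subgroup.mem_zpowers a
    · exact hba ▸ Subgroup.mem_zpowers a
  refine ⟨htop, ?_⟩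
  -- hom to Multiplicative (ZMod (2k))
  have hcond : ∀ r ∈ nestRelsAll k,
      FreeGroup.lift (fun _ : Fin 2 => Multiplicative.ofAdd (1 : ZMod (2 * k))) r = 1 := by
    have key : ∀ n m : ℕ, ((n + m : ℕ) : ZMod (2 * k)) = 0 →
        FreeGroup.lift (fun _ : Fin 2 => Multiplicative.ofAdd (1 : ZMod (2 * k)))
          (FreeGroup.of (0 : Fin 2) ^ n * FreeGroup.of (1 : Fin 2) ^ m) = 1 := by
      intro n m hnm
      rw [map_mul, map_pow, map_pow, FreeGroup.lift_apply_of, FreeGroup.lift_apply_of,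
        ← ofAdd_nsmul, ← ofAdd_nsmul, ← ofAdd_add]
      have h' : (n • (1 : ZMod (2 * k)) + m • (1 : ZMod (2 * k))) = ((n + m : ℕ) : ZMod (2 * k)) := by
        push_cast [nsmul_eq_mul]; ring
      rw [h', hnm]
      rfl
    have key' : ∀ n m : ℕ, ((n + m : ℕ) : ZMod (2 * k)) = 0 →
        FreeGroup.lift (fun _ : Fin 2 => Multiplicative.ofAdd (1 : ZMod (2 * k)))
          (FreeGroup.of (1 : Fin 2) ^ n * FreeGroup.of (0 : Fin 2) ^ m) = 1 := by
      intro n m hnm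
      rw [map_mul, map_pow, map_pow, FreeGroup.lift_apply_of, FreeGroup.lift_apply_of,
        ← ofAdd_nsmul, ← ofAdd_nsmul, ← ofAdd_add]
      have h' : (n • (1 : ZMod (2 * k)) + m • (1 : ZMod (2 * k))) = ((n + m : ℕ) : ZMod (2 * k)) := by
        push_cast [nsmul_eq_mul]; ring
      rw [h', hnm]
      rfl
    rintro r (hr | hr)
    · rw [Set.mem_singleton_iff] at hr
      subst hr
      exact key _ _ (by rw [Nat.cast_add, ZMod.natCast_self, add_zero])
    · simp only [Set.mem_iUnion] at hr
      obtain ⟨i, ⟨hik, -⟩, hr⟩ := hr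
      rcases hr with hr | hr
      · rw [hr]
        refine key _ _ ?_
        rw [show 2 * k - i + i = 2 * k by omega, ZMod.natCast_self]
      · rw [Set.mem_singleton_iff] at hr
        rw [hr]
        refine key' _ _ ?_
        rw [show 2 * k - i + i = 2 * k by omega, ZMod.natCast_self]
  set φ := PresentedGroup.toGroup hcond
  have hφa : φ a = Multiplicative.ofAdd (1 : ZMod (2 * k)) := PresentedGroup.toGroup.of hcond
  have hord1 : orderOf a ∣ 2 * k := orderOf_dvd_of_pow_eq_one h0
  have hord2 : (2 * k) ∣ orderOf a := by
    have := orderOf_map_dvd φ a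
    rw [hφa] at this
    rwa [orderOf_ofAdd_eq_addOrderOf, ZMod.addOrderOf_one] at this
  have hord : orderOf a = 2 * k := Nat.dvd_antisymm hord1 hord2
  calc Nat.card (PresentedGroup (nestRelsAll k))
      = Nat.card (⊤ : Subgroup (PresentedGroup (nestRelsAll k))) := by
        rw [Subgroup.card_top]
    _ = Nat.card (Subgroup.zpowers a) := by rw [htop]
    _ = orderOf a := Nat.card_zpowers a
    _ = 2 * k := hord
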